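/- Fix an integer d ≥ 1, T > 0, and let Q be a d×d real matrix with Q_{ij} > 0 for all i ≠ j and Σ_{j=1}^d Q_{ij} = 0 for every i. Let ν ∈ 𝕄_T and let (ν_n) be a sequence in 𝕄_T, with kernels K and K_n respectively, such that for every i ∈ {1,…,d}, K_n(s,i) → K(s,i) as n → ∞ for Lebesgue-almost every s ∈ [0,T]. Then Ĩ_T(ν_n) → Ĩ_T(ν) as n → ∞. -/

import Mathlib

open MeasureTheory Filter Topology

/-- A kernel on `[0,T] × {1,…,d}`. -/
def IsMKernel (d : ℕ) (T : ℝ) (K : ℝ → Fin d → ℝ) : Prop :=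
  (∀ i : Fin d, Measurable fun s => K s i) ∧
    ∀ s ∈ Set.Icc (0:ℝ) T, (∀ i : Fin d, 0 ≤ K s i) ∧ ∑ i : Fin d, K s i = 1

/-- The Donsker–Varadhan type rate function
`Ĩ_T(ν) = ∫₀ᵀ sup_{u ∈ U} [ -∑_i ((Qu)_i / u_i) K_ν(s,i) ] ds`, expressed through the
kernel `K` of `ν` (here `U` is the set of componentwise strictly positive vectors). -/
noncomputable def Itilde (d : ℕ) (T : ℝ) (Q : Matrix (Fin d) (Fin d) ℝ)
    (K : ℝ → Fin d → ℝ) : ℝ :=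
  ∫ s in (0:ℝ)..T,
    ⨆ u : {u : Fin d → ℝ // ∀ i : Fin d, 0 < u i},
      -∑ i : Fin d, (Q.mulVec u.1 i / u.1 i) * K s i

section ItildeAux
open Finset

variable {d : ℕ} {Q : Matrix (Fin d) (Fin d) ℝ}

/-- The inner functional `u ↦ -∑ i ((Qu)_i/u_i) p_i`. -/
noncomputable def phiQ (Q : Matrix (Fin d) (Fin d) ℝ) (u p : Fin d → ℝ) : ℝ :=
  -∑ i : Fin d, (Q.mulVec u i / u i) * p i

/-- The Donsker–Varadhan functional on the simplex. -/
noncomputable def gsup (Q : Matrix (Fin d) (Fin d) ℝ) (p : Fin d → ℝ) : ℝ :=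
  ⨆ u : {u : Fin d → ℝ // ∀ i : Fin d, 0 < u i}, phiQ Q u.1 p

/-- Rational-vector version of `gsup`. -/
noncomputable def gsupQ (Q : Matrix (Fin d) (Fin d) ℝ) (p : Fin d → ℝ) : ℝ :=
  ⨆ v : {v : Fin d → ℚ // ∀ i : Fin d, 0 < v i}, phiQ Q (fun i => (v.1 i : ℝ)) p

def InSimplex (p : Fin d → ℝ) : Prop := (∀ i, 0 ≤ p i) ∧ ∑ i, p i = 1

noncomputable def SQ (Q : Matrix (Fin d) (Fin d) ℝ) (i : Fin d) (u : Fin d → ℝ) : ℝ :=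
  ∑ j ∈ univ.erase i, Q i j * u j

noncomputable def CQ (Q : Matrix (Fin d) (Fin d) ℝ) : ℝ := ∑ i, (-Q i i)

instance posNonempty : Nonempty {u : Fin d → ℝ // ∀ i : Fin d, 0 < u i} :=
  ⟨⟨fun _ => 1, fun _ => one_pos⟩⟩
instance posNonemptyQ : Nonempty {v : Fin d → ℚ // ∀ i : Fin d, 0 < v i} :=
  ⟨⟨fun _ => 1, fun _ => one_pos⟩⟩

set_option linter.unusedSectionVars false

section Basic
variable (hQpos : ∀ i j : Fin d, i ≠ j → 0 < Q i j)
  (hQrow : ∀ i : Fin d, ∑ j : Fin d, Q i j = 0)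
include hQpos hQrow

lemma diag_eq' (i : Fin d) : Q i i = -∑ j ∈ univ.erase i, Q i j := by
  have := hQrow i
  rw [← Finset.add_sum_erase _ _ (mem_univ i)] at this
  linarith

lemma SQ_nonneg' {u : Fin d → ℝ} (hu : ∀ i, 0 ≤ u i) (i : Fin d) : 0 ≤ SQ Q i u :=
  Finset.sum_nonneg fun j hj =>
    mul_nonneg (hQpos i j (Finset.ne_of_mem_erase hj).symm).le (hu j)

lemma diag_nonpos' (i : Fin d) : Q i i ≤ 0 := by
  rw [diag_eq' hQpos hQrow i]
  simp only [neg_nonpos]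
  exact Finset.sum_nonneg fun j hj => (hQpos i j (Finset.ne_of_mem_erase hj).symm).le

lemma CQ_nonneg' : 0 ≤ CQ Q :=
  Finset.sum_nonneg fun i _ => by simpa using diag_nonpos' hQpos hQrow i

lemma neg_diag_le_CQ' (i : Fin d) : -Q i i ≤ CQ Q :=
  Finset.single_le_sum (f := fun j => -Q j j)
    (fun j _ => neg_nonneg.2 (diag_nonpos' hQpos hQrow j)) (mem_univ i)

end Basic

lemma phiQ_expand' {u : Fin d → ℝ} (hu : ∀ i, 0 < u i) (p : Fin d → ℝ) :
    phiQ Q u p = ∑ i, p i * (-Q i i) - ∑ i, p i * (SQ Q i u / u i) := by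
  rw [phiQ, ← Finset.sum_sub_distrib, ← Finset.sum_neg_distrib]
  refine Finset.sum_congr rfl fun i _ => ?_
  have hui := (hu i).ne'
  have : Q.mulVec u i = Q i i * u i + SQ Q i u := by
    rw [Matrix.mulVec, dotProduct, SQ, ← Finset.add_sum_erase _ _ (mem_univ i)]
  rw [this]
  field_simp
  ring

lemma simplex_le_one' {p : Fin d → ℝ} (hp : InSimplex p) (i : Fin d) : p i ≤ 1 := by
  rw [← hp.2]
  exact Finset.single_le_sum (fun j _ => hp.1 j) (mem_univ i)

section Basic2
variable (hQpos : ∀ i j : Fin d, i ≠ j → 0 < Q i j)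
  (hQrow : ∀ i : Fin d, ∑ j : Fin d, Q i j = 0)
include hQpos hQrow

lemma A_le_CQ' {p : Fin d → ℝ} (hp : InSimplex p) : ∑ i, p i * (-Q i i) ≤ CQ Q := by
  refine Finset.sum_le_sum fun i _ => ?_
  have h1 : -Q i i ≥ 0 := by simpa using diag_nonpos' hQpos hQrow i
  nlinarith [simplex_le_one' hp i, hp.1 i]

lemma phiQ_le' {u : Fin d → ℝ} (hu : ∀ i, 0 < u i) {p : Fin d → ℝ} (hp : InSimplex p) :
    phiQ Q u p ≤ CQ Q := by
  rw [phiQ_expand' hu]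
  have h2 : 0 ≤ ∑ i, p i * (SQ Q i u / u i) :=
    Finset.sum_nonneg fun i _ => mul_nonneg (hp.1 i)
      (div_nonneg (SQ_nonneg' hQpos hQrow (fun j => (hu j).le) i) (hu i).le)
  linarith [A_le_CQ' hQpos hQrow hp]

lemma bddAbove_phiQ' {p : Fin d → ℝ} (hp : InSimplex p) :
    BddAbove (Set.range fun u : {u : Fin d → ℝ // ∀ i : Fin d, 0 < u i} => phiQ Q u.1 p) := by
  refine ⟨CQ Q, ?_⟩
  rintro x ⟨u, rfl⟩
  exact phiQ_le' hQpos hQrow u.2 hp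

lemma phiQ_one' (p : Fin d → ℝ) : phiQ Q (fun _ => 1) p = 0 := by
  have : ∀ i, Q.mulVec (fun _ => 1) i = 0 := by
    intro i; simpa [Matrix.mulVec, dotProduct] using hQrow i
  simp [phiQ, this]

lemma gsup_nonneg' {p : Fin d → ℝ} (hp : InSimplex p) : 0 ≤ gsup Q p := by
  have h := le_ciSup (bddAbove_phiQ' hQpos hQrow hp) (⟨fun _ => 1, fun _ => one_pos⟩ :
    {u : Fin d → ℝ // ∀ i : Fin d, 0 < u i})
  rw [phiQ_one' hQpos hQrow p] at h
  exact h

lemma gsup_le_CQ' {p : Fin d → ℝ} (hp : InSimplex p) : gsup Q p ≤ CQ Q :=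
  ciSup_le fun u => phiQ_le' hQpos hQrow u.2 hp

end Basic2

lemma phiQ_continuousAt (p : Fin d → ℝ) {u : Fin d → ℝ} (hu : ∀ i, 0 < u i) :
    ContinuousAt (fun w => phiQ Q w p) u := by
  unfold phiQ
  apply Filter.Tendsto.neg
  apply tendsto_finset_sum
  intro i _
  refine Filter.Tendsto.mul_const _
    (Filter.Tendsto.div ?_ ((continuous_apply i).tendsto u) (hu i).ne')
  have : Continuous fun w : Fin d → ℝ => Q.mulVec w i := by
    simp only [Matrix.mulVec, dotProduct]
    exact continuous_finset_sum _ fun j _ => (continuous_const.mul (continuous_apply j))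
  exact this.tendsto u

lemma rat_approx {u : Fin d → ℝ} (hu : ∀ i, 0 < u i) {δ : ℝ} (hδ : 0 < δ) :
    ∃ v : Fin d → ℚ, (∀ i, 0 < v i) ∧ dist (fun i => (v i : ℝ)) u < δ := by
  have h : ∀ i : Fin d, ∃ q : ℚ, max (u i - δ/2) (u i / 2) < (q:ℝ) ∧ (q:ℝ) < u i := by
    intro i
    exact exists_rat_btwn (max_lt (by linarith [hu i]) (by linarith [hu i]))
  choose v hv1 hv2 using h
  refine ⟨v, fun i => ?_, ?_⟩
  · have := (le_max_right _ _).trans_lt (hv1 i)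
    exact_mod_cast lt_of_le_of_lt (by linarith [hu i] : (0:ℝ) ≤ u i / 2) this
  · rw [dist_pi_lt_iff hδ]
    intro i
    rw [Real.dist_eq, abs_lt]
    constructor
    · have := (le_max_left _ _).trans_lt (hv1 i); linarith
    · linarith [hv2 i, hδ]

lemma bddAbove_phiQrat {p : Fin d → ℝ} {c : ℝ}
    (hb : ∀ u : Fin d → ℝ, (∀ i, 0 < u i) → phiQ Q u p ≤ c) :
    BddAbove (Set.range fun v : {v : Fin d → ℚ // ∀ i : Fin d, 0 < v i} =>
      phiQ Q (fun i => (v.1 i : ℝ)) p) := by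
  refine ⟨c, ?_⟩
  rintro x ⟨v, rfl⟩
  exact hb _ (fun i => by exact_mod_cast v.2 i)

lemma gsup_eq_gsupQ {p : Fin d → ℝ} {c : ℝ}
    (hb : ∀ u : Fin d → ℝ, (∀ i, 0 < u i) → phiQ Q u p ≤ c) :
    gsup Q p = gsupQ Q p := by
  apply le_antisymm
  · refine ciSup_le fun u => ?_
    refine le_of_forall_pos_le_add fun ε hε => ?_
    obtain ⟨δ, hδpos, hδ⟩ := Metric.continuousAt_iff.1 (phiQ_continuousAt p u.2) ε hε
    obtain ⟨v, hvpos, hvd⟩ := rat_approx u.2 hδpos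
    have hne := hδ hvd
    rw [Real.dist_eq, abs_lt] at hne
    have hle : phiQ Q (fun i => (v i : ℝ)) p ≤ gsupQ Q p :=
      le_ciSup (bddAbove_phiQrat hb) ⟨v, hvpos⟩
    linarith
  · refine ciSup_le fun v => ?_
    have hvposR : ∀ i, (0:ℝ) < (v.1 i : ℝ) := fun i => by exact_mod_cast v.2 i
    exact le_ciSup (⟨c, by rintro x ⟨u, rfl⟩; exact hb _ u.2⟩ :
      BddAbove (Set.range fun u : {u : Fin d → ℝ // ∀ i : Fin d, 0 < u i} => phiQ Q u.1 p))
      (⟨fun i => (v.1 i : ℝ), hvposR⟩ : {u : Fin d → ℝ // ∀ i : Fin d, 0 < u i})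

lemma measurable_gsupQ (K : ℝ → Fin d → ℝ) (hK : ∀ i, Measurable fun s => K s i) :
    Measurable fun s => gsupQ Q (K s) := by
  apply Measurable.iSup
  intro v
  apply Measurable.neg
  apply Finset.measurable_sum
  intro i _
  exact (hK i).const_mul _

set_option maxHeartbeats 4000000 in
lemma gsup_uc2 (hd2 : 2 ≤ d) (hQpos : ∀ i j : Fin d, i ≠ j → 0 < Q i j)
    (hQrow : ∀ i : Fin d, ∑ j : Fin d, Q i j = 0) {ε : ℝ} (hε : 0 < ε) :
    ∃ δ : ℝ, 0 < δ ∧ ∀ p q : Fin d → ℝ, InSimplex p → InSimplex q →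
      (∀ i, |p i - q i| ≤ δ) → gsup Q p - ε ≤ gsup Q q := by
  classical
  set C := CQ Q with hCdef
  have hC0 : 0 ≤ C := CQ_nonneg' hQpos hQrow
  -- two distinct indices
  have h01 : (⟨0, by omega⟩ : Fin d) ≠ (⟨1, by omega⟩ : Fin d) := by
    simp [Fin.ext_iff]
  -- minimum off-diagonal entry
  have hne : (univ.offDiag (α := Fin d)).Nonempty :=
    ⟨(⟨0, by omega⟩, ⟨1, by omega⟩), Finset.mem_offDiag.2 ⟨mem_univ _, mem_univ _, h01⟩⟩
  set qm := Finset.inf' _ hne (fun ij : Fin d × Fin d => Q ij.1 ij.2) with hqmdef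
  have hqm_le : ∀ i j : Fin d, i ≠ j → qm ≤ Q i j := by
    intro i j hij
    have := Finset.inf'_le (b := ((i, j) : Fin d × Fin d))
      (f := fun ij : Fin d × Fin d => Q ij.1 ij.2)
      (Finset.mem_offDiag.2 ⟨mem_univ _, mem_univ _, hij⟩)
    rw [hqmdef]
    convert this using 2
  have hqm_pos : 0 < qm := by
    rw [hqmdef, Finset.lt_inf'_iff]
    rintro ⟨i, j⟩ hij
    exact hQpos i j (Finset.mem_offDiag.1 hij).2.2
  have hqm_le_C : qm ≤ C := by
    refine (hqm_le _ _ h01).trans ?_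
    refine le_trans ?_ (neg_diag_le_CQ' hQpos hQrow ⟨0, by omega⟩)
    rw [diag_eq' hQpos hQrow, neg_neg]
    refine Finset.single_le_sum (fun j hj => (hQpos _ j (Finset.ne_of_mem_erase hj).symm).le) ?_
    exact Finset.mem_erase.2 ⟨h01.symm, mem_univ _⟩
  set c := qm / (C + 1) with hcdef
  have hC1 : (0:ℝ) < C + 1 := by linarith
  have hc0 : 0 < c := div_pos hqm_pos hC1
  have hc1 : c ≤ 1 := by
    rw [hcdef, div_le_one hC1]; linarith
  set a := min ε 1 with hadef
  have ha0 : 0 < a := lt_min hε one_pos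
  have ha1 : a ≤ 1 := min_le_right _ _
  have haε : a ≤ ε := min_le_left _ _
  set D := 8 * (d:ℝ) * C + 8 with hDdef
  have hd1R : (1:ℝ) ≤ (d:ℝ) := by exact_mod_cast Nat.one_le_of_lt hd2
  have hD0 : 0 < D := by nlinarith
  have hdCD : 8 * ((d:ℝ) * C) ≤ D := by nlinarith
  have hCD : 8 * C ≤ D := by nlinarith
  set t := min 1 (min ((a/D)^2) (c * a / D)) with htdef
  have ht0 : 0 < t := by
    refine lt_min one_pos (lt_min (by positivity) (by positivity))
  have ht1 : t ≤ 1 := min_le_left _ _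
  have hsqrt : Real.sqrt t ≤ a / D := by
    have : t ≤ (a/D)^2 := le_trans (min_le_right _ _) (min_le_left _ _)
    calc Real.sqrt t ≤ Real.sqrt ((a/D)^2) := Real.sqrt_le_sqrt this
    _ = a/D := by rw [Real.sqrt_sq (by positivity)]
  have htc : t / c ≤ a / D := by
    rw [div_le_div_iff₀ hc0 hD0]
    have : t ≤ c * a / D := le_trans (min_le_right _ _) (min_le_right _ _)
    calc t * D ≤ (c * a / D) * D := by nlinarith
    _ = a * c := by field_simp
  set δ := min (a/D) (a * t / (D * (1+t))) with hδdef
  have hδ0 : 0 < δ := lt_min (by positivity) (by positivity)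
  have hδa : δ ≤ a / D := min_le_left _ _
  have hδt : δ ≤ a * t / (D * (1+t)) := min_le_right _ _
  clear_value C qm c a D t δ
  refine ⟨δ, hδ0, ?_⟩
  intro p q hp hq hpq
  -- near-optimal u
  have hlt : gsup Q p - a/4 < gsup Q p := by linarith
  obtain ⟨u, hu⟩ := exists_lt_of_lt_ciSup hlt
  obtain ⟨jm, -, hjm⟩ := Finset.exists_max_image univ u.1 ⟨⟨0, by omega⟩, mem_univ _⟩
  set M := u.1 jm with hMdef
  have hjmM : ∀ i, u.1 i ≤ M := fun i => by rw [hMdef]; exact hjm i (mem_univ i)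
  have hM0 : 0 < M := by rw [hMdef]; exact u.2 jm
  clear_value M
  set u' : Fin d → ℝ := fun i => u.1 i + t * M with hu'def
  have hu'pos : ∀ i, 0 < u' i := fun i => by have := u.2 i; positivity
  have hu'ieq : ∀ i, u' i = u.1 i + t * M := fun i => by rw [hu'def]
  clear_value u'
  -- B-bound from near-optimality
  have hphi_lb : -1 ≤ phiQ Q u.1 p := by
    have := gsup_nonneg' hQpos hQrow hp
    linarith
  have hB : ∑ k, p k * (SQ Q k u.1 / u.1 k) ≤ C + 1 := by
    have hexp := phiQ_expand' (Q := Q) u.2 p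
    have hA := A_le_CQ' hQpos hQrow hp
    linarith
  have hBk : ∀ i, p i * (SQ Q i u.1 / u.1 i) ≤ C + 1 := by
    intro i
    refine le_trans (Finset.single_le_sum (f := fun k => p k * (SQ Q k u.1 / u.1 k))
      (fun k _ => mul_nonneg (hp.1 k)
        (div_nonneg (SQ_nonneg' hQpos hQrow (fun j => (u.2 j).le) k) (u.2 k).le)) (mem_univ i)) hB
  -- lower bound on u i
  have hlb : ∀ i, Real.sqrt t < p i → c * p i * M ≤ u.1 i := by
    intro i hpi
    have hpi0 : 0 < p i := lt_of_le_of_lt (Real.sqrt_nonneg t) hpi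
    by_cases hijm : i = jm
    · subst hijm
      have : c * p i ≤ 1 := by nlinarith [simplex_le_one' hp i]
      nlinarith
    · have hSlow : qm * M ≤ SQ Q i u.1 := by
        have hmem : jm ∈ univ.erase i := Finset.mem_erase.2 ⟨fun h => hijm h.symm, mem_univ _⟩
        have h1 : Q i jm * u.1 jm ≤ SQ Q i u.1 :=
          Finset.single_le_sum (f := fun j => Q i j * u.1 j)
            (fun j hj => mul_nonneg (hQpos i j (Finset.ne_of_mem_erase hj).symm).le (u.2 j).le)
            hmem
        have h2 : qm ≤ Q i jm := hqm_le i jm hijm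
        have h3 : u.1 jm = M := hMdef.symm
        nlinarith [hM0]
      have h1 : p i * SQ Q i u.1 ≤ (C + 1) * u.1 i := by
        have := hBk i
        rw [mul_div_assoc'] at this
        exact (div_le_iff₀ (u.2 i)).1 this
      have h2 : p i * (qm * M) ≤ (C+1) * u.1 i :=
        le_trans (by nlinarith) h1
      rw [hcdef]
      rw [div_mul_eq_mul_div, div_mul_eq_mul_div, div_le_iff₀ hC1]
      nlinarith
  -- termwise estimate
  have hterm : ∀ i, q i * (SQ Q i u' / u' i) ≤ p i * (SQ Q i u.1 / u.1 i)
      + (δ * (C * (1+t)/t) + C * (Real.sqrt t + t/c)) := by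
    intro i
    have hQii : 0 ≤ -Q i i := neg_nonneg.2 (diag_nonpos' hQpos hQrow i)
    have hQiiC : -Q i i ≤ C := by rw [hCdef]; exact neg_diag_le_CQ' hQpos hQrow i
    have hSnn : 0 ≤ SQ Q i u.1 := SQ_nonneg' hQpos hQrow (fun j => (u.2 j).le) i
    have hSle : SQ Q i u.1 ≤ M * (-Q i i) := by
      rw [SQ, diag_eq' hQpos hQrow, neg_neg, Finset.mul_sum]
      refine Finset.sum_le_sum fun j hj => ?_
      have h1 := hjmM j
      have h2 := (hQpos i j (Finset.ne_of_mem_erase hj).symm).le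
      have := u.2 j
      nlinarith
    have hS' : SQ Q i u' = SQ Q i u.1 + t * M * (-Q i i) := by
      rw [SQ, SQ, diag_eq' hQpos hQrow, neg_neg, Finset.mul_sum, ← Finset.sum_add_distrib]
      refine Finset.sum_congr rfl fun j hj => ?_
      rw [hu'ieq j]
      ring
    have hu'i : u' i = u.1 i + t * M := hu'ieq i
    have htM : 0 < t * M := by positivity
    have hu'ge : t * M ≤ u' i := by rw [hu'i]; linarith [u.2 i]
    have hu'geu : u.1 i ≤ u' i := by rw [hu'i]; linarith
    have hu'0 : 0 < u' i := hu'pos i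
    have hS'nn : 0 ≤ SQ Q i u' := by rw [hS']; positivity
    have hXnn : 0 ≤ SQ Q i u' / u' i := div_nonneg hS'nn hu'0.le
    -- step 1
    have hstep1 : SQ Q i u' / u' i ≤ C * (1+t)/t := by
      have h1 : SQ Q i u' ≤ M * (-Q i i) * (1 + t) := by
        rw [hS', show M * (-Q i i) * (1 + t) = M * (-Q i i) + t * M * (-Q i i) by ring]
        linarith
      have h2 : SQ Q i u' / u' i ≤ (M * (-Q i i) * (1+t)) / (t * M) :=
        div_le_div₀ (by positivity) h1 htM hu'ge
      have h3 : (M * (-Q i i) * (1+t)) / (t * M) = (-Q i i) * ((1+t)/t) := by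
        field_simp
      have h4 : (-Q i i) * ((1+t)/t) ≤ C * ((1+t)/t) :=
        mul_le_mul_of_nonneg_right hQiiC (by positivity)
      rw [h3] at h2
      calc SQ Q i u' / u' i ≤ (-Q i i) * ((1+t)/t) := h2
        _ ≤ C * ((1+t)/t) := h4
        _ = C * (1+t)/t := by ring
    -- step 2
    have hstep2 : (q i - p i) * (SQ Q i u' / u' i) ≤ δ * (C * (1+t)/t) := by
      have h1 : q i - p i ≤ δ := by
        have := abs_le.1 (hpq i); linarith [this.1]
      calc (q i - p i) * (SQ Q i u' / u' i) ≤ δ * (SQ Q i u' / u' i) :=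
            mul_le_mul_of_nonneg_right h1 hXnn
        _ ≤ δ * (C * (1+t)/t) := mul_le_mul_of_nonneg_left hstep1 hδ0.le
    -- step 3
    have hstep3 : p i * (SQ Q i u' / u' i) ≤ p i * (SQ Q i u.1 / u.1 i)
        + C * (p i * (t * M / u' i)) := by
      have h1 : SQ Q i u' / u' i = SQ Q i u.1 / u' i + (-Q i i) * (t * M / u' i) := by
        rw [hS', add_div]; ring
      have h2 : SQ Q i u.1 / u' i ≤ SQ Q i u.1 / u.1 i :=
        div_le_div_of_nonneg_left hSnn (u.2 i) hu'geu
      have h3 : (-Q i i) * (t * M / u' i) ≤ C * (t * M / u' i) :=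
        mul_le_mul_of_nonneg_right hQiiC (by positivity)
      have h4 : p i * (SQ Q i u' / u' i) ≤ p i * (SQ Q i u.1 / u.1 i + C * (t * M / u' i)) := by
        refine mul_le_mul_of_nonneg_left ?_ (hp.1 i)
        rw [h1]; linarith
      calc p i * (SQ Q i u' / u' i) ≤ p i * (SQ Q i u.1 / u.1 i + C * (t * M / u' i)) := h4
        _ = p i * (SQ Q i u.1 / u.1 i) + C * (p i * (t * M / u' i)) := by ring
    -- step 4
    have hstep4 : p i * (t * M / u' i) ≤ Real.sqrt t + t / c := by
      rcases le_or_gt (p i) (Real.sqrt t) with hpi | hpi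
      · have h1 : t * M / u' i ≤ 1 := by
          rw [div_le_one hu'0]; linarith
        have h2 : p i * (t * M / u' i) ≤ p i * 1 :=
          mul_le_mul_of_nonneg_left h1 (hp.1 i)
        have h3 : 0 ≤ t / c := by positivity
        rw [mul_one] at h2
        linarith
      · have hpi0 : 0 < p i := lt_of_le_of_lt (Real.sqrt_nonneg t) hpi
        have hlbi := hlb i hpi
        have hcpM : 0 < c * p i * M := by positivity
        have h1 : t * M / u' i ≤ t * M / (c * p i * M) :=
          div_le_div_of_nonneg_left htM.le hcpM (le_trans hlbi hu'geu)
        have h2 : p i * (t * M / (c * p i * M)) = t / c := by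
          field_simp
        have h3 : p i * (t * M / u' i) ≤ p i * (t * M / (c * p i * M)) :=
          mul_le_mul_of_nonneg_left h1 (hp.1 i)
        have h4 : 0 ≤ Real.sqrt t := Real.sqrt_nonneg t
        rw [h2] at h3
        linarith
    -- combine
    have h5 : C * (p i * (t * M / u' i)) ≤ C * (Real.sqrt t + t/c) :=
      mul_le_mul_of_nonneg_left hstep4 hC0
    have hcomb : q i * (SQ Q i u' / u' i)
        = (q i - p i) * (SQ Q i u' / u' i) + p i * (SQ Q i u' / u' i) := by ring
    rw [hcomb]
    linarith
  -- sum the estimates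
  have hsumB : ∑ i, q i * (SQ Q i u' / u' i) ≤ ∑ i, p i * (SQ Q i u.1 / u.1 i)
      + ((d:ℝ) * (δ * (C * (1+t)/t)) + (d:ℝ) * (C * (Real.sqrt t + t/c))) := by
    calc ∑ i, q i * (SQ Q i u' / u' i)
        ≤ ∑ i, (p i * (SQ Q i u.1 / u.1 i) + (δ * (C * (1+t)/t) + C * (Real.sqrt t + t/c))) :=
          Finset.sum_le_sum fun i _ => hterm i
      _ = ∑ i, p i * (SQ Q i u.1 / u.1 i)
          + ((d:ℝ) * (δ * (C * (1+t)/t)) + (d:ℝ) * (C * (Real.sqrt t + t/c))) := by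
          rw [Finset.sum_add_distrib, Finset.sum_const, card_univ, Fintype.card_fin,
            nsmul_eq_mul]
          ring
  have hsumA : ∑ i, p i * (-Q i i) - δ * C ≤ ∑ i, q i * (-Q i i) := by
    have h : ∑ i, (p i * (-Q i i) - δ * (-Q i i)) ≤ ∑ i, q i * (-Q i i) := by
      refine Finset.sum_le_sum fun i _ => ?_
      have hQii : 0 ≤ -Q i i := neg_nonneg.2 (diag_nonpos' hQpos hQrow i)
      have h1 : p i - q i ≤ δ := by have := abs_le.1 (hpq i); linarith [this.2]
      have := mul_le_mul_of_nonneg_right h1 hQii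
      linarith
    rw [Finset.sum_sub_distrib, ← Finset.mul_sum] at h
    have : ∑ i, (-Q i i) = C := by rw [hCdef]; rfl
    rw [this] at h
    exact h
  -- error bounds
  have hE1 : δ * C ≤ a / 8 := by
    have h1 : δ * C ≤ (a/D) * C := mul_le_mul_of_nonneg_right hδa hC0
    have h2 : (a/D) * C ≤ a/8 := by
      rw [div_mul_eq_mul_div, div_le_div_iff₀ hD0 (by norm_num : (0:ℝ) < 8)]
      nlinarith [mul_le_mul_of_nonneg_left hCD ha0.le]
    linarith
  have hE2 : (d:ℝ) * (δ * (C * (1+t)/t)) ≤ a / 8 := by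
    have hX : 0 ≤ C * (1+t)/t := by positivity
    have h1 : δ * (C * (1+t)/t) ≤ (a * t / (D * (1+t))) * (C * (1+t)/t) :=
      mul_le_mul_of_nonneg_right hδt hX
    have h2 : (a * t / (D * (1+t))) * (C * (1+t)/t) = a * C / D := by
      field_simp
    rw [h2] at h1
    have h3 : (d:ℝ) * (δ * (C * (1+t)/t)) ≤ (d:ℝ) * (a * C / D) :=
      mul_le_mul_of_nonneg_left h1 (Nat.cast_nonneg d)
    have h4 : (d:ℝ) * (a * C / D) ≤ a/8 := by
      rw [mul_div_assoc', div_le_div_iff₀ hD0 (by norm_num : (0:ℝ) < 8)]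
      nlinarith [mul_le_mul_of_nonneg_left hdCD ha0.le]
    linarith
  have hE3 : (d:ℝ) * (C * (Real.sqrt t + t/c)) ≤ a / 4 := by
    have h1 : Real.sqrt t + t/c ≤ 2 * (a/D) := by linarith
    have h2 : (0:ℝ) ≤ (d:ℝ) * C := mul_nonneg (Nat.cast_nonneg d) hC0
    have h3 : (d:ℝ) * (C * (Real.sqrt t + t/c)) = ((d:ℝ) * C) * (Real.sqrt t + t/c) := by ring
    have h4 : ((d:ℝ) * C) * (Real.sqrt t + t/c) ≤ ((d:ℝ) * C) * (2 * (a/D)) :=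
      mul_le_mul_of_nonneg_left h1 h2
    have h5 : ((d:ℝ) * C) * (2 * (a/D)) ≤ a/4 := by
      rw [show ((d:ℝ)*C)*(2*(a/D)) = (2*a*((d:ℝ)*C))/D by ring,
        div_le_div_iff₀ hD0 (by norm_num : (0:ℝ) < 4)]
      nlinarith [mul_le_mul_of_nonneg_left hdCD ha0.le]
    rw [h3]
    linarith
  -- finish
  have hbdd := bddAbove_phiQ' hQpos hQrow hq
  have hgq : phiQ Q u' q ≤ gsup Q q := le_ciSup hbdd ⟨u', hu'pos⟩
  have hexpp := phiQ_expand' (Q := Q) u.2 p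
  have hexpq := phiQ_expand' (Q := Q) hu'pos q
  have hkey : phiQ Q u.1 p
      - (δ*C + ((d:ℝ)*(δ*(C*(1+t)/t)) + (d:ℝ)*(C*(Real.sqrt t + t/c)))) ≤ phiQ Q u' q := by
    rw [hexpp, hexpq]
    linarith [hsumA, hsumB]
  linarith [hE1, hE2, hE3, hu, haε, hgq, hkey]

lemma gsup_d1 (hd1 : d = 1) (hQrow : ∀ i : Fin d, ∑ j : Fin d, Q i j = 0)
    (p : Fin d → ℝ) : gsup Q p = 0 := by
  subst hd1
  have hQ0 : ∀ i j : Fin 1, Q i j = 0 := by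
    intro i j
    have h := hQrow i
    rw [Fin.sum_univ_one] at h
    have hj : j = 0 := Subsingleton.elim j 0
    rw [hj]; exact h
  have hphi : ∀ u : {u : Fin 1 → ℝ // ∀ i : Fin 1, 0 < u i}, phiQ Q u.1 p = 0 := by
    intro u
    have hmv : Q.mulVec u.1 0 = 0 := by
      simp [Matrix.mulVec, dotProduct, Fin.sum_univ_one, hQ0]
    rw [phiQ, Fin.sum_univ_one, hmv]
    simp
  calc gsup Q p = ⨆ _ : {u : Fin 1 → ℝ // ∀ i : Fin 1, 0 < u i}, (0:ℝ) := by
        rw [gsup]; congr 1; funext u; exact hphi u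
    _ = 0 := ciSup_const

lemma gsup_uc (hd : 1 ≤ d) (hQpos : ∀ i j : Fin d, i ≠ j → 0 < Q i j)
    (hQrow : ∀ i : Fin d, ∑ j : Fin d, Q i j = 0) {ε : ℝ} (hε : 0 < ε) :
    ∃ δ : ℝ, 0 < δ ∧ ∀ p q : Fin d → ℝ, InSimplex p → InSimplex q →
      (∀ i, |p i - q i| ≤ δ) → gsup Q p - ε ≤ gsup Q q := by
  rcases lt_or_ge d 2 with hd2 | hd2
  · have hd1 : d = 1 := by omega
    exact ⟨1, one_pos, fun p q _ _ _ => by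
      rw [gsup_d1 hd1 hQrow p, gsup_d1 hd1 hQrow q]; linarith⟩
  · exact gsup_uc2 hd2 hQpos hQrow hε

lemma tendsto_gsup (hd : 1 ≤ d) (hQpos : ∀ i j : Fin d, i ≠ j → 0 < Q i j)
    (hQrow : ∀ i : Fin d, ∑ j : Fin d, Q i j = 0) {p : Fin d → ℝ} {pn : ℕ → Fin d → ℝ}
    (hp : InSimplex p) (hpn : ∀ n, InSimplex (pn n))
    (h : ∀ i, Tendsto (fun n => pn n i) atTop (𝓝 (p i))) :
    Tendsto (fun n => gsup Q (pn n)) atTop (𝓝 (gsup Q p)) := by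
  rw [Metric.tendsto_atTop]
  intro ε hε
  obtain ⟨δ, hδ0, hδ⟩ := gsup_uc hd hQpos hQrow (half_pos hε)
  have hev : ∀ᶠ n in atTop, ∀ i, |pn n i - p i| ≤ δ := by
    rw [Filter.eventually_all]
    intro i
    have := (h i).eventually (Metric.closedBall_mem_nhds (p i) hδ0)
    filter_upwards [this] with n hn
    simp only [Metric.mem_closedBall, Real.dist_eq] at hn
    exact hn
  obtain ⟨N, hN⟩ := hev.exists_forall_of_atTop
  refine ⟨N, fun n hn => ?_⟩
  have h1 := hδ p (pn n) hp (hpn n) (fun i => by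
    rw [abs_sub_comm]; exact hN n hn i)
  have h2 := hδ (pn n) p (hpn n) hp (hN n hn)
  rw [Real.dist_eq, abs_lt]
  constructor <;> linarith

end ItildeAux


/-- If the kernels `K_n` of `ν_n ∈ 𝕄_T` converge Lebesgue-a.e. on `[0,T]` to the kernel
`K` of `ν ∈ 𝕄_T`, then `Ĩ_T(ν_n) → Ĩ_T(ν)`. -/
theorem Itilde_continuous (d : ℕ) (hd : 1 ≤ d) (T : ℝ) (hT : 0 < T)
    (Q : Matrix (Fin d) (Fin d) ℝ)
    (hQpos : ∀ i j : Fin d, i ≠ j → 0 < Q i j)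
    (hQrow : ∀ i : Fin d, ∑ j : Fin d, Q i j = 0)
    (ν : C(Set.Icc (0:ℝ) T, Fin d → ℝ)) (νn : ℕ → C(Set.Icc (0:ℝ) T, Fin d → ℝ))
    (K : ℝ → Fin d → ℝ) (Kn : ℕ → ℝ → Fin d → ℝ)
    (hK : IsMKernel d T K) (hKn : ∀ n : ℕ, IsMKernel d T (Kn n))
    (hνK : ∀ t : Set.Icc (0:ℝ) T, ∀ i : Fin d, ν t i = ∫ s in (0:ℝ)..(t:ℝ), K s i)
    (hνnKn : ∀ n : ℕ, ∀ t : Set.Icc (0:ℝ) T, ∀ i : Fin d,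
      νn n t i = ∫ s in (0:ℝ)..(t:ℝ), Kn n s i)
    (hconv : ∀ i : Fin d,
      ∀ᵐ s ∂(volume.restrict (Set.Icc (0:ℝ) T)),
        Tendsto (fun n => Kn n s i) atTop (𝓝 (K s i))) :
    Tendsto (fun n => Itilde d T Q (Kn n)) atTop (𝓝 (Itilde d T Q K)) := by
  have hIt : ∀ K' : ℝ → Fin d → ℝ,
      Itilde d T Q K' = ∫ s in Set.Ioc (0:ℝ) T, gsup Q (K' s) := by
    intro K'
    rw [Itilde, intervalIntegral.integral_of_le hT.le]
    rfl
  simp only [hIt]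
  have haeIcc : ∀ᵐ s ∂(volume.restrict (Set.Ioc (0:ℝ) T)), s ∈ Set.Icc (0:ℝ) T := by
    filter_upwards [ae_restrict_mem measurableSet_Ioc] with s hs
    exact Set.Ioc_subset_Icc_self hs
  refine MeasureTheory.tendsto_integral_of_dominated_convergence (fun _ => CQ Q) ?_ ?_ ?_ ?_
  · intro n
    refine ((measurable_gsupQ (Q := Q) (Kn n) (hKn n).1).aestronglyMeasurable).congr ?_
    filter_upwards [haeIcc] with s hs
    exact (gsup_eq_gsupQ (fun u hu => phiQ_le' hQpos hQrow hu
      ⟨((hKn n).2 s hs).1, ((hKn n).2 s hs).2⟩)).symm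
  · exact integrableOn_const measure_Ioc_lt_top.ne
  · intro n
    filter_upwards [haeIcc] with s hs
    have hsx : InSimplex (Kn n s) := ⟨((hKn n).2 s hs).1, ((hKn n).2 s hs).2⟩
    rw [Real.norm_eq_abs, abs_le]
    exact ⟨by linarith [gsup_nonneg' hQpos hQrow hsx, CQ_nonneg' hQpos hQrow (Q := Q)],
      gsup_le_CQ' hQpos hQrow hsx⟩
  · have hconv' : ∀ᵐ s ∂(volume.restrict (Set.Ioc (0:ℝ) T)),
        ∀ i, Tendsto (fun n => Kn n s i) atTop (𝓝 (K s i)) := by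
      have h := (ae_all_iff).2 hconv
      exact ae_mono (Measure.restrict_mono Set.Ioc_subset_Icc_self le_rfl) h
    filter_upwards [hconv', haeIcc] with s hsc hs
    exact tendsto_gsup hd hQpos hQrow ⟨(hK.2 s hs).1, (hK.2 s hs).2⟩
      (fun n => ⟨((hKn n).2 s hs).1, ((hKn n).2 s hs).2⟩) hsc
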